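/- Under the same acyclic sparsity assumptions and product structure X = X₁ × ⋯ × X_r, X_T = X_{1,T} × ⋯ × X_{r,T}, the finite-time region of attraction satisfies R_T = {x ∈ X : x_{P(x_i)} ∈ R_T^i for each leaf x_i}, where R_T^i is the region of attraction of the subsystem induced by the past of leaf x_i with target set the corresponding product of X_{j,T}. -/
import Mathlib


/-- sparse decomposition of the finite-time region of attraction. With the
product constraint set `X = ∏ Xs j`, product target set `X_T = ∏ XTs j`, and the pasts
`I r` of the leaves of the acyclic sparsity graph (covering all blocks, each inducing a
subsystem whose flow commutes with the projection), the ROA of the full system equals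
`{x ∈ X : x_{I r} ∈ R_T^r for all r}`. -/
theorem sparse_ROA_decomposition (N l : ℕ) (d : Fin N → ℕ) (T : ℝ) (hT : 0 ≤ T)
    (Xs XTs : ∀ j, Set (Fin (d j) → ℝ))
    (hXc : ∀ j, IsCompact (Xs j)) (hXTc : ∀ j, IsCompact (XTs j))
    (I : Fin l → Finset (Fin N)) (hcover : ∀ j : Fin N, ∃ r, j ∈ I r)
    (φ : ℝ → (∀ j, Fin (d j) → ℝ) → (∀ j, Fin (d j) → ℝ))
    (φsub : ∀ r : Fin l, ℝ → (∀ j : {j // j ∈ I r}, Fin (d j.1) → ℝ) →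
        (∀ j : {j // j ∈ I r}, Fin (d j.1) → ℝ))
    (hφ0 : ∀ x, φ 0 x = x)
    (hcomm : ∀ r : Fin l, ∀ t ≥ (0 : ℝ), ∀ x : ∀ j, Fin (d j) → ℝ,
        φsub r t (fun j => x j.1) = fun j : {j // j ∈ I r} => φ t x j.1) :
    {x | (∀ t ∈ Set.Icc (0 : ℝ) T, ∀ j, φ t x j ∈ Xs j) ∧ ∀ j, φ T x j ∈ XTs j} =
    {x | (∀ j, x j ∈ Xs j) ∧
      ∀ r : Fin l, (fun j : {j // j ∈ I r} => x j.1) ∈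
        {y | (∀ t ∈ Set.Icc (0 : ℝ) T, ∀ j : {j // j ∈ I r}, φsub r t y j ∈ Xs j.1) ∧
          ∀ j : {j // j ∈ I r}, φsub r T y j ∈ XTs j.1}} := by
  ext x
  simp only [Set.mem_setOf_eq]
  constructor
  · rintro ⟨hX, hXT⟩
    refine ⟨fun j => by simpa [hφ0] using hX 0 ⟨le_refl 0, hT⟩ j, fun r => ⟨?_, ?_⟩⟩
    · intro t ht j
      rw [hcomm r t ht.1 x]
      exact hX t ht j.1
    · intro j
      rw [hcomm r T hT x]
      exact hXT j.1
  · rintro ⟨hX, hsub⟩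
    constructor
    · intro t ht j
      obtain ⟨r, hr⟩ := hcover j
      have := (hsub r).1 t ht ⟨j, hr⟩
      rwa [hcomm r t ht.1 x] at this
    · intro j
      obtain ⟨r, hr⟩ := hcover j
      have := (hsub r).2 ⟨j, hr⟩
      rwa [hcomm r T hT x] at this
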